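/- Let A, B, X be n×n complex matrices with A and B positive definite, let λ₁,…,λₙ be the eigenvalues of A and ν₁,…,νₙ the eigenvalues of B, and set K̲ = min{ K((λᵢ/νⱼ)^{1/2}, 2) : i, j = 1,…,n }. If 1/2 < v < 1, then ‖(1 − v)AX + vXB‖_F² − (1 − v)²‖AX − XB‖_F² ≥ r₁‖A^{1/2} X B^{1/2} − XB‖_F² + K̲^{r̂₁} ‖A^{1−v} X B^{v}‖_F², where r = min{v, 1 − v}, r₁ = min{2r, 1 − 2r} and r̂₁ = min{2r₁, 1 − 2r₁}. -/

import Mathlib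

open Matrix
open scoped ComplexOrder

/-- Real power of a matrix, defined for Hermitian matrices via the spectral
decomposition (functional calculus); junk value otherwise. -/
noncomputable def mrpow {n : ℕ} (A : Matrix (Fin n) (Fin n) ℂ) (t : ℝ) :
    Matrix (Fin n) (Fin n) ℂ :=
  if h : A.IsHermitian then
    (h.eigenvectorUnitary : Matrix (Fin n) (Fin n) ℂ)
      * Matrix.diagonal (fun i => ((h.eigenvalues i ^ t : ℝ) : ℂ))
      * star (h.eigenvectorUnitary : Matrix (Fin n) (Fin n) ℂ)
  else A

/-- The squared Hilbert-Schmidt (Frobenius) norm `‖A‖_F^2`. -/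
noncomputable def frobSq {n : ℕ} (A : Matrix (Fin n) (Fin n) ℂ) : ℝ :=
  ∑ i : Fin n, ∑ j : Fin n, ‖A i j‖ ^ 2

/-- The Kantorovich constant `K(t, 2) = (t + 1)^2 / (4 t)`. -/
noncomputable def Kant (t : ℝ) : ℝ := (t + 1) ^ 2 / (4 * t)

/-! ### Scalar lemmas -/

/-- weighted AM-GM: x^q ≤ qx + 1 - q -/
lemma amgm (x q : ℝ) (hx : 0 ≤ x) (hq0 : 0 ≤ q) (hq1 : q ≤ 1) :
    x ^ q ≤ q * x + (1 - q) := by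
  have := Real.geom_mean_le_arith_mean2_weighted (w₁ := q) (w₂ := 1-q) (p₁ := x)
    (p₂ := 1) hq0 (by linarith) hx zero_le_one (by ring)
  simpa [Real.one_rpow] using this

/-- Kantorovich refinement in ratio form, case p ≤ 1/2. -/
lemma KYh (h p : ℝ) (hh : 0 < h) (hp0 : 0 ≤ p) (hp : p ≤ 1/2) :
    Kant h ^ p * h ^ p ≤ p * h + (1 - p) := by
  have h1 : (0:ℝ) < h + 1 := by linarith
  have hK : (0:ℝ) < Kant h := div_pos (by nlinarith) (by linarith)
  have key : Kant h ^ p * h ^ p = ((h+1)/2) ^ (2*p) := by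
    rw [← Real.mul_rpow hK.le hh.le]
    have : Kant h * h = ((h+1)/2)^2 := by
      unfold Kant; field_simp; ring
    rw [this, ← Real.rpow_natCast ((h+1)/2) 2, ← Real.rpow_mul (by positivity)]
    norm_num [mul_comm]
  rw [key]
  have := amgm ((h+1)/2) (2*p) (by positivity) (by linarith) (by linarith)
  calc ((h+1)/2) ^ (2*p) ≤ 2*p * ((h+1)/2) + (1 - 2*p) := this
    _ = p * h + (1 - p) := by ring

lemma Kant_inv (h : ℝ) (hh : 0 < h) : Kant h⁻¹ = Kant h := by
  unfold Kant; rw [div_eq_div_iff (by positivity) (by positivity)]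
  field_simp; ring

/-- Kantorovich-refined Young inequality. -/
lemma KY (u s p : ℝ) (hu : 0 < u) (hs : 0 < s) (hp0 : 0 ≤ p) (hp1 : p ≤ 1) :
    Kant (u/s) ^ (min p (1-p)) * (u ^ p * s ^ (1-p)) ≤ p * u + (1-p) * s := by
  have hh : (0:ℝ) < u/s := by positivity
  have hus : u ^ p * s ^ (1-p) = (u/s) ^ p * s := by
    rw [Real.div_rpow hu.le hs.le, Real.rpow_sub hs, Real.rpow_one]
    have : s ^ p ≠ 0 := by positivity
    field_simp
  rcases le_or_gt p (1/2) with hc | hc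
  · have hmin : min p (1-p) = p := min_eq_left (by linarith)
    rw [hmin, hus, ← mul_assoc]
    have := KYh (u/s) p hh hp0 hc
    calc Kant (u/s) ^ p * (u/s) ^ p * s ≤ (p * (u/s) + (1-p)) * s := by
          apply mul_le_mul_of_nonneg_right this hs.le
      _ = p * u + (1-p) * s := by field_simp
  · have hmin : min p (1-p) = 1-p := min_eq_right (by linarith)
    have h2 : Kant (u/s) = Kant (s/u) := by
      rw [← Kant_inv (s/u) (by positivity), inv_div]
    have hus2 : u ^ p * s ^ (1-p) = (s/u) ^ (1-p) * u := by
      rw [Real.div_rpow hs.le hu.le]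
      have h3 : u ^ (1-p) ≠ 0 := by positivity
      rw [show p = 1 - (1-p) by ring, Real.rpow_sub hu, Real.rpow_one]
      field_simp
      ring
    rw [hmin, h2, hus2, ← mul_assoc]
    have := KYh (s/u) (1-p) (by positivity) (by linarith) (by linarith)
    calc Kant (s/u) ^ (1-p) * (s/u) ^ (1-p) * u ≤ ((1-p) * (s/u) + (1-(1-p))) * u := by
          apply mul_le_mul_of_nonneg_right this hu.le
      _ = p * u + (1-p) * s := by field_simp; ring

lemma exp_sq (t : ℝ) : Real.exp t ^ 2 = Real.exp (2*t) := by
  rw [pow_two, ← Real.exp_add]; ring_nf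

lemma exp_rpow' (x y : ℝ) : Real.exp x ^ y = Real.exp (x * y) := by
  rw [Real.rpow_def_of_pos (Real.exp_pos x), Real.log_exp]

/-- KY in exponential form. -/
lemma KY' (α β p : ℝ) (hp0 : 0 ≤ p) (hp1 : p ≤ 1) :
    Kant (Real.exp (α - β)) ^ (min p (1-p)) * Real.exp (p*α + (1-p)*β)
      ≤ p * Real.exp α + (1-p) * Real.exp β := by
  have := KY (Real.exp α) (Real.exp β) p (Real.exp_pos α) (Real.exp_pos β) hp0 hp1
  rwa [← Real.exp_sub, exp_rpow', exp_rpow', ← Real.exp_add,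
    show α * p + β * (1-p) = p*α + (1-p)*β by ring] at this

lemma scalar_main (a b v K r1 rh1 : ℝ) (ha : 0 < a) (hb : 0 < b)
    (hv0 : 1/2 < v) (hv : v < 1)
    (hr1 : r1 = min (2*(1-v)) (2*v-1)) (hrh1 : rh1 = min (2*r1) (1-2*r1))
    (hK1 : 1 ≤ K) (hKle : K ≤ Kant (Real.sqrt (a/b))) :
    r1 * (a ^ ((1:ℝ)/2) * b ^ ((1:ℝ)/2) - b)^2 + K ^ rh1 * (a ^ (1-v) * b ^ v)^2
      ≤ ((1-v)*a + v*b)^2 - (1-v)^2 * (a-b)^2 := by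
  set la := Real.log a with hla
  set lb := Real.log b with hlb
  have ea : a = Real.exp la := (Real.exp_log ha).symm
  have eb : b = Real.exp lb := (Real.exp_log hb).symm
  set S := Real.exp ((la + lb)/2) with hS
  have hS2 : S ^ 2 = a * b := by
    rw [hS, exp_sq, ea, eb, ← Real.exp_add]; ring_nf
  have hSd : a ^ ((1:ℝ)/2) * b ^ ((1:ℝ)/2) = S := by
    rw [Real.rpow_def_of_pos ha, Real.rpow_def_of_pos hb, ← Real.exp_add, hS,
      ← hla, ← hlb]; ring_nf
  have hP : (a ^ (1-v) * b ^ v)^2 = Real.exp (2*(1-v)*la + 2*v*lb) := by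
    rw [Real.rpow_def_of_pos ha, Real.rpow_def_of_pos hb, ← Real.exp_add, exp_sq,
      ← hla, ← hlb]; ring_nf
  have hsqrt : Real.sqrt (a/b) = Real.exp ((la - lb)/2) := by
    rw [Real.sqrt_eq_rpow, Real.rpow_def_of_pos (by positivity),
      Real.log_div ha.ne' hb.ne', ← hla, ← hlb]; ring_nf
  have hKpos : (0:ℝ) ≤ K := by linarith
  have hr1nn : 0 ≤ r1 := by rw [hr1]; rcases le_total (2*(1-v)) (2*v-1) with h|h <;>
    simp [min_eq_left, min_eq_right, h] <;> linarith
  have hr1half : r1 ≤ 1/2 := by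
    rw [hr1]
    rcases le_total (2*(1-v)) (2*v-1) with h|h
    · exact le_trans (min_le_left _ _) (by linarith)
    · exact le_trans (min_le_right _ _) (by linarith)
  have hrh1nn : 0 ≤ rh1 := by
    rw [hrh1]
    rcases le_total (2*r1) (1-2*r1) with h|h
    · rw [min_eq_left h]; linarith
    · rw [min_eq_right h]; linarith
  have hKK : K ^ rh1 ≤ Kant (Real.sqrt (a/b)) ^ rh1 :=
    Real.rpow_le_rpow hKpos hKle hrh1nn
  have hPpos : (0:ℝ) ≤ (a ^ (1-v) * b ^ v)^2 := sq_nonneg _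
  rcases le_total ((3:ℝ)/4) v with hc | hc
  · -- v ≥ 3/4
    have hr1' : r1 = 2 - 2*v := by rw [hr1, min_eq_left (by linarith)]; ring
    have key := KY' ((la+lb)/2 + lb) (2*lb) (4-4*v) (by linarith) (by linarith)
    have hmin : min (4-4*v) (1-(4-4*v)) = rh1 := by
      rw [hrh1, hr1']; ring_nf
    have harg : (la+lb)/2 + lb - 2*lb = (la - lb)/2 := by ring
    have hexp : (4-4*v)*((la+lb)/2 + lb) + (1-(4-4*v))*(2*lb)
        = 2*(1-v)*la + 2*v*lb := by ring
    rw [hmin, harg, hexp, ← hsqrt, ← hP] at key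
    have heA : Real.exp ((la+lb)/2 + lb) = S * b := by
      rw [Real.exp_add, ← hS, eb]
    have heB : Real.exp (2*lb) = b^2 := by rw [eb, exp_sq]
    rw [heA, heB] at key
    have step : K ^ rh1 * (a ^ (1-v) * b ^ v)^2 ≤ (4-4*v)*(S*b) + (1-(4-4*v))*b^2 :=
      le_trans (mul_le_mul_of_nonneg_right hKK hPpos) key
    have iden : ((1-v)*a + v*b)^2 - (1-v)^2 * (a-b)^2
        = r1 * (S - b)^2 + ((4-4*v)*(S*b) + (1-(4-4*v))*b^2) := by
      rw [hr1']; linear_combination (2*v - 2) * hS2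
    rw [hSd, iden]
    linarith
  · -- v ≤ 3/4
    have hr1' : r1 = 2*v - 1 := by rw [hr1, min_eq_right (by linarith)]
    have key := KY' (la + lb) ((la+lb)/2 + lb) (3-4*v) (by linarith) (by linarith)
    have hmin : min (3-4*v) (1-(3-4*v)) = rh1 := by
      rw [hrh1, hr1', min_comm]; ring_nf
    have harg : la + lb - ((la+lb)/2 + lb) = (la - lb)/2 := by ring
    have hexp : (3-4*v)*(la + lb) + (1-(3-4*v))*((la+lb)/2 + lb)
        = 2*(1-v)*la + 2*v*lb := by ring
    rw [hmin, harg, hexp, ← hsqrt, ← hP] at key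
    have heA : Real.exp (la + lb) = a * b := by rw [Real.exp_add, ea, eb]
    have heB : Real.exp ((la+lb)/2 + lb) = S * b := by rw [Real.exp_add, ← hS, eb]
    rw [heA, heB] at key
    have step : K ^ rh1 * (a ^ (1-v) * b ^ v)^2 ≤ (3-4*v)*(a*b) + (1-(3-4*v))*(S*b) :=
      le_trans (mul_le_mul_of_nonneg_right hKK hPpos) key
    have iden : ((1-v)*a + v*b)^2 - (1-v)^2 * (a-b)^2
        = r1 * (S - b)^2 + ((3-4*v)*(a*b) + (1-(3-4*v))*(S*b)) := by
      rw [hr1']; linear_combination (1 - 2*v) * hS2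
    rw [hSd, iden]
    linarith

lemma Kant_ge_one (t : ℝ) (ht : 0 < t) : 1 ≤ Kant t := by
  rw [Kant, le_div_iff₀ (by positivity)]; nlinarith [sq_nonneg (t-1)]

/-! ### Matrix lemmas -/

lemma frobSq_trace {n : ℕ} (M : Matrix (Fin n) (Fin n) ℂ) :
    frobSq M = (Matrix.trace (Mᴴ * M)).re := by
  unfold frobSq
  rw [Matrix.trace]
  simp only [Matrix.diag, Matrix.mul_apply, Matrix.conjTranspose_apply]
  rw [Complex.re_sum]
  rw [Finset.sum_comm]
  congr 1; ext i
  rw [Complex.re_sum]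
  congr 1; ext j
  rw [Complex.sq_norm, Complex.star_def, ← Complex.normSq_eq_conj_mul_self,
    Complex.ofReal_re]

lemma frobSq_conj {n : ℕ} (U V M : Matrix (Fin n) (Fin n) ℂ)
    (hU : star U * U = 1) (hV : star V * V = 1) :
    frobSq (U * M * star V) = frobSq M := by
  rw [frobSq_trace, frobSq_trace M]
  congr 1
  have : (U * M * star V)ᴴ * (U * M * star V) = V * (Mᴴ * M) * star V := by
    simp only [← Matrix.star_eq_conjTranspose, Matrix.star_mul, star_star]
    calc V * (star M * star U) * (U * M * star V)
        = V * star M * ((star U * U) * (M * star V)) := by noncomm_ring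
      _ = V * (star M * M) * star V := by rw [hU, one_mul]; noncomm_ring
  rw [this, Matrix.trace_mul_cycle, ← Matrix.star_eq_conjTranspose, hV, one_mul]

lemma sandwich_smul {n : ℕ} (c : ℂ) (U M V' : Matrix (Fin n) (Fin n) ℂ) :
    c • (U * M * V') = U * (c • M) * V' := by
  rw [Matrix.mul_smul, Matrix.smul_mul]

lemma sandwich_add {n : ℕ} (U M N V' : Matrix (Fin n) (Fin n) ℂ) :
    U * M * V' + U * N * V' = U * (M + N) * V' := by
  rw [Matrix.mul_add, Matrix.add_mul]

lemma sandwich_sub {n : ℕ} (U M N V' : Matrix (Fin n) (Fin n) ℂ) :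
    U * M * V' - U * N * V' = U * (M - N) * V' := by
  rw [Matrix.mul_sub, Matrix.sub_mul]

lemma frobSq_entry {n : ℕ} (M Y : Matrix (Fin n) (Fin n) ℂ) (c : Fin n → Fin n → ℝ)
    (h : ∀ i j, M i j = (c i j : ℂ) * Y i j) :
    frobSq M = ∑ i : Fin n, ∑ j : Fin n, (c i j)^2 * ‖Y i j‖ ^ 2 := by
  unfold frobSq
  congr 1; ext i; congr 1; ext j
  rw [h i j, norm_mul, Complex.norm_real, Real.norm_eq_abs, mul_pow, sq_abs]

theorem stmt_17 {n : ℕ} (A B X : Matrix (Fin n) (Fin n) ℂ) (v Kmin r r1 rh1 : ℝ)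
    (hn : 0 < n) (hA : A.PosDef) (hB : B.PosDef)
    (hK : Kmin = sInf (Set.range fun p : Fin n × Fin n =>
      Kant (Real.sqrt (hA.1.eigenvalues p.1 / hB.1.eigenvalues p.2))))
    (hr : r = min v (1 - v)) (hr1 : r1 = min (2 * r) (1 - 2 * r))
    (hrh1 : rh1 = min (2 * r1) (1 - 2 * r1))
    (hv0 : 1 / 2 < v) (hv : v < 1) :
    frobSq (((1 - v : ℝ) : ℂ) • (A * X) + ((v : ℝ) : ℂ) • (X * B))
        - (1 - v) ^ 2 * frobSq (A * X - X * B) ≥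
      r1 * frobSq (mrpow A (1 / 2) * X * mrpow B (1 / 2) - X * B)
        + Kmin ^ rh1 * frobSq (mrpow A (1 - v) * X * mrpow B v) := by
  classical
  set a : Fin n → ℝ := hA.1.eigenvalues with hadef
  set b : Fin n → ℝ := hB.1.eigenvalues with hbdef
  have hapos : ∀ i, 0 < a i := fun i => hA.eigenvalues_pos i
  have hbpos : ∀ j, 0 < b j := fun j => hB.eigenvalues_pos j
  set U : Matrix (Fin n) (Fin n) ℂ := (hA.1.eigenvectorUnitary : Matrix (Fin n) (Fin n) ℂ) with hUdef
  set V : Matrix (Fin n) (Fin n) ℂ := (hB.1.eigenvectorUnitary : Matrix (Fin n) (Fin n) ℂ) with hVdef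
  have hU1 : star U * U = 1 := Unitary.coe_star_mul_self _
  have hU2 : U * star U = 1 := Unitary.coe_mul_star_self _
  have hV1 : star V * V = 1 := Unitary.coe_star_mul_self _
  have hV2 : V * star V = 1 := Unitary.coe_mul_star_self _
  set Y : Matrix (Fin n) (Fin n) ℂ := star U * X * V with hYdef
  have hX : X = U * Y * star V := by
    rw [hYdef]
    calc X = (U * star U) * X * (V * star V) := by rw [hU2, hV2, one_mul, mul_one]
      _ = U * (star U * X * V) * star V := by noncomm_ring
  have hAspec : A = U * Matrix.diagonal ((fun i => ((a i : ℝ) : ℂ))) * star U := hA.1.spectral_theorem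
  have hBspec : B = V * Matrix.diagonal ((fun j => ((b j : ℝ) : ℂ))) * star V := hB.1.spectral_theorem
  have hmA : ∀ t : ℝ, mrpow A t
      = U * Matrix.diagonal (fun i => ((a i ^ t : ℝ) : ℂ)) * star U := by
    intro t; simp only [mrpow, dif_pos hA.1]; rfl
  have hmB : ∀ t : ℝ, mrpow B t
      = V * Matrix.diagonal (fun i => ((b i ^ t : ℝ) : ℂ)) * star V := by
    intro t; simp only [mrpow, dif_pos hB.1]; rfl
  -- sandwich forms
  have g1 : A * X = U * (Matrix.diagonal ((fun i => ((a i : ℝ) : ℂ))) * Y) * star V := by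
    rw [hAspec, hX]
    calc (U * Matrix.diagonal ((fun i => ((a i : ℝ) : ℂ))) * star U) * (U * Y * star V)
        = U * (Matrix.diagonal ((fun i => ((a i : ℝ) : ℂ))) * ((star U * U) * (Y * star V))) := by
          noncomm_ring
      _ = U * (Matrix.diagonal ((fun i => ((a i : ℝ) : ℂ))) * Y) * star V := by
          rw [hU1, one_mul]; noncomm_ring
  have g2 : X * B = U * (Y * Matrix.diagonal ((fun j => ((b j : ℝ) : ℂ)))) * star V := by
    rw [hBspec, hX]
    calc (U * Y * star V) * (V * Matrix.diagonal ((fun j => ((b j : ℝ) : ℂ))) * star V)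
        = U * (Y * ((star V * V) * (Matrix.diagonal ((fun j => ((b j : ℝ) : ℂ))) * star V))) := by
          noncomm_ring
      _ = U * (Y * Matrix.diagonal ((fun j => ((b j : ℝ) : ℂ)))) * star V := by
          rw [hV1, one_mul]; noncomm_ring
  have g3 : ∀ s t : ℝ, mrpow A s * X * mrpow B t
      = U * (Matrix.diagonal (fun i => ((a i ^ s : ℝ) : ℂ)) * Y
          * Matrix.diagonal (fun j => ((b j ^ t : ℝ) : ℂ))) * star V := by
    intro s t
    rw [hmA, hmB, hX]
    calc (U * Matrix.diagonal (fun i => ((a i ^ s : ℝ) : ℂ)) * star U) * (U * Y * star V)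
          * (V * Matrix.diagonal (fun j => ((b j ^ t : ℝ) : ℂ)) * star V)
        = U * (Matrix.diagonal (fun i => ((a i ^ s : ℝ) : ℂ)) * ((star U * U)
            * (Y * ((star V * V) * (Matrix.diagonal (fun j => ((b j ^ t : ℝ) : ℂ)) * star V))))) := by
          noncomm_ring
      _ = U * (Matrix.diagonal (fun i => ((a i ^ s : ℝ) : ℂ)) * Y
            * Matrix.diagonal (fun j => ((b j ^ t : ℝ) : ℂ))) * star V := by
          rw [hU1, hV1, one_mul, one_mul]; noncomm_ring
  -- frobSq computations
  have f1 : frobSq (((1 - v : ℝ) : ℂ) • (A * X) + ((v : ℝ) : ℂ) • (X * B))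
      = ∑ i : Fin n, ∑ j : Fin n, ((1-v) * a i + v * b j)^2 * ‖Y i j‖ ^ 2 := by
    rw [g1, g2, sandwich_smul, sandwich_smul, sandwich_add, frobSq_conj _ _ _ hU1 hV1]
    apply frobSq_entry
    intro i j
    simp only [Matrix.add_apply, Matrix.smul_apply, Matrix.diagonal_mul, Matrix.mul_diagonal,
      Function.comp_apply, smul_eq_mul]
    push_cast
    ring
  have f2 : frobSq (A * X - X * B)
      = ∑ i : Fin n, ∑ j : Fin n, (a i - b j)^2 * ‖Y i j‖ ^ 2 := by
    rw [g1, g2, sandwich_sub, frobSq_conj _ _ _ hU1 hV1]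
    apply frobSq_entry
    intro i j
    simp only [Matrix.sub_apply, Matrix.diagonal_mul, Matrix.mul_diagonal,
      Function.comp_apply]
    push_cast
    ring
  have f3 : frobSq (mrpow A (1/2) * X * mrpow B (1/2) - X * B)
      = ∑ i : Fin n, ∑ j : Fin n,
          (a i ^ ((1:ℝ)/2) * b j ^ ((1:ℝ)/2) - b j)^2 * ‖Y i j‖ ^ 2 := by
    rw [g3, g2, sandwich_sub, frobSq_conj _ _ _ hU1 hV1]
    apply frobSq_entry
    intro i j
    simp only [Matrix.sub_apply, Matrix.diagonal_mul, Matrix.mul_diagonal,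
      Function.comp_apply]
    push_cast
    ring
  have f4 : frobSq (mrpow A (1 - v) * X * mrpow B v)
      = ∑ i : Fin n, ∑ j : Fin n,
          (a i ^ (1-v) * b j ^ v)^2 * ‖Y i j‖ ^ 2 := by
    rw [g3, frobSq_conj _ _ _ hU1 hV1]
    apply frobSq_entry
    intro i j
    simp only [Matrix.diagonal_mul, Matrix.mul_diagonal, Function.comp_apply]
    push_cast
    ring
  -- Kmin facts
  have hne : Nonempty (Fin n × Fin n) := ⟨(⟨0, hn⟩, ⟨0, hn⟩)⟩
  have hlb : ∀ x ∈ Set.range fun p : Fin n × Fin n =>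
      Kant (Real.sqrt (a p.1 / b p.2)), (1:ℝ) ≤ x := by
    rintro x ⟨p, rfl⟩
    exact Kant_ge_one _ (Real.sqrt_pos.mpr (div_pos (hapos p.1) (hbpos p.2)))
  have hK1 : 1 ≤ Kmin := by
    rw [hK]
    exact le_csInf (Set.range_nonempty _) hlb
  have hKle : ∀ i j, Kmin ≤ Kant (Real.sqrt (a i / b j)) := by
    intro i j
    rw [hK]
    exact csInf_le ⟨1, hlb⟩ ⟨(i, j), rfl⟩
  have hr1' : r1 = min (2*(1-v)) (2*v-1) := by
    rw [hr1, hr, min_eq_right (by linarith : 1 - v ≤ v)]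
    congr 1
    ring
  have hrh1' : rh1 = min (2*r1) (1-2*r1) := hrh1
  -- pointwise inequality
  have point : ∀ i j : Fin n,
      r1 * ((a i ^ ((1:ℝ)/2) * b j ^ ((1:ℝ)/2) - b j)^2 * ‖Y i j‖ ^ 2)
        + Kmin ^ rh1 * ((a i ^ (1-v) * b j ^ v)^2 * ‖Y i j‖ ^ 2)
      ≤ ((1-v) * a i + v * b j)^2 * ‖Y i j‖ ^ 2
        - (1-v)^2 * ((a i - b j)^2 * ‖Y i j‖ ^ 2) := by
    intro i j
    have hs := scalar_main (a i) (b j) v Kmin r1 rh1 (hapos i) (hbpos j) hv0 hv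
      hr1' hrh1' hK1 (hKle i j)
    have hy : (0:ℝ) ≤ ‖Y i j‖ ^ 2 := by positivity
    nlinarith [mul_le_mul_of_nonneg_right hs hy]
  rw [ge_iff_le, f1, f2, f3, f4]
  simp only [Finset.mul_sum]
  rw [← Finset.sum_sub_distrib, ← Finset.sum_add_distrib]
  apply Finset.sum_le_sum
  intro i _
  rw [← Finset.sum_sub_distrib, ← Finset.sum_add_distrib]
  exact Finset.sum_le_sum fun j _ => point i j
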